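/- Let ℓ be an odd prime, n ≥ 1, and γ ∈ GL₂(Z/ℓⁿZ) such that the reduction of γ modulo ℓ is not a scalar matrix. If Δ(γ) is a square in Z/ℓⁿZ, then γ has an eigenvector: there exist a primitive vector v ∈ (Z/ℓⁿZ)² and λ ∈ Z/ℓⁿZ with γ·v = λ·v. -/

import Mathlib

/-- A vector in `(ZMod N)²` is primitive (w.r.t. `ℓ ∣ N`) if its reduction
modulo `ℓ` is nonzero. -/
def IsPrimitive (ℓ N : ℕ) (h : ℓ ∣ N) (v : Fin 2 → ZMod N) : Prop :=
  (fun i => ZMod.castHom h (ZMod ℓ) (v i)) ≠ 0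

private lemma quad_aux {R : Type*} [CommRing R] {t dt σ e : R}
    (h2 : (2 : R) * e = 1) (hs : t ^ 2 - 4 * dt = σ ^ 2) :
    (e * (t + σ)) ^ 2 - t * (e * (t + σ)) + dt = 0 := by
  linear_combination (t * e * (t + σ) - dt * (1 + 2 * e)) * h2 - e ^ 2 * hs

/-- For an odd prime `ℓ`, `n ≥ 1`, and `γ ∈ GL₂(ℤ/ℓⁿℤ)` whose reduction
mod `ℓ` is not scalar: if the discriminant `(tr γ)² - 4 det γ` is a square mod `ℓⁿ`, then
`γ` has a primitive eigenvector. -/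
theorem stmt_3 (ℓ n : ℕ) (hℓ : ℓ.Prime) (hℓodd : ℓ ≠ 2) (hn : 1 ≤ n)
    (γ : Matrix.GeneralLinearGroup (Fin 2) (ZMod (ℓ ^ n)))
    (hred : ¬ ∃ c : ZMod ℓ,
      γ.val.map (ZMod.castHom (dvd_pow_self ℓ (by omega : n ≠ 0)) (ZMod ℓ))
        = c • (1 : Matrix (Fin 2) (Fin 2) (ZMod ℓ)))
    (hsq : ∃ s : ZMod (ℓ ^ n), (Matrix.trace γ.val) ^ 2 - 4 * γ.val.det = s ^ 2) :
    ∃ (v : Fin 2 → ZMod (ℓ ^ n)) (lam : ZMod (ℓ ^ n)),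
      IsPrimitive ℓ (ℓ ^ n) (dvd_pow_self ℓ (by omega : n ≠ 0)) v ∧
      γ.val.mulVec v = lam • v := by
  obtain ⟨s, hs⟩ := hsq
  have hdvd : ℓ ∣ ℓ ^ n := dvd_pow_self ℓ (by omega)
  set π := ZMod.castHom hdvd (ZMod ℓ) with hπ
  set a := γ.val 0 0 with ha
  set b := γ.val 0 1 with hb0
  set c := γ.val 1 0 with hc0
  set d := γ.val 1 1 with hd0
  rw [Matrix.trace_fin_two, Matrix.det_fin_two] at hs
  -- 2 is a unit
  have h2u : IsUnit (2 : ZMod (ℓ ^ n)) := by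
    rw [show (2 : ZMod (ℓ ^ n)) = ((2 : ℕ) : ZMod (ℓ ^ n)) by norm_cast,
      ZMod.isUnit_iff_coprime]
    exact Nat.Coprime.pow_right _
      ((Nat.coprime_primes Nat.prime_two hℓ).mpr (Ne.symm hℓodd))
  obtain ⟨e, h2e⟩ : ∃ e : ZMod (ℓ ^ n), 2 * e = 1 := h2u.exists_right_inv
  haveI : Fact ℓ.Prime := ⟨hℓ⟩
  -- primitivity helper
  have prim : ∀ v : Fin 2 → ZMod (ℓ ^ n), (∃ i, π (v i) ≠ 0) →
      IsPrimitive ℓ (ℓ ^ n) (dvd_pow_self ℓ (by omega : n ≠ 0)) v := by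
    rintro v ⟨i, hi⟩ h0
    exact hi (by simpa [hπ] using congrFun h0 i)
  -- eigenvector helpers
  have eig1 : ∀ σ : ZMod (ℓ ^ n), (a + d) ^ 2 - 4 * (a * d - b * c) = σ ^ 2 →
      γ.val.mulVec ![b, e * ((a + d) + σ) - a]
        = (e * ((a + d) + σ)) • ![b, e * ((a + d) + σ) - a] := by
    intro σ hσ
    have hq := quad_aux (dt := a * d - b * c) h2e hσ
    have hγ : γ.val = !![a, b; c, d] := by
      rw [ha, hb0, hc0, hd0]; exact Matrix.eta_fin_two γ.val
    rw [hγ]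
    funext i
    fin_cases i <;>
      simp [Matrix.mulVec, dotProduct, Fin.sum_univ_two]
    · ring
    · linear_combination -hq
  have eig2 : ∀ σ : ZMod (ℓ ^ n), (a + d) ^ 2 - 4 * (a * d - b * c) = σ ^ 2 →
      γ.val.mulVec ![e * ((a + d) + σ) - d, c]
        = (e * ((a + d) + σ)) • ![e * ((a + d) + σ) - d, c] := by
    intro σ hσ
    have hq := quad_aux (dt := a * d - b * c) h2e hσ
    have hγ : γ.val = !![a, b; c, d] := by
      rw [ha, hb0, hc0, hd0]; exact Matrix.eta_fin_two γ.val
    rw [hγ]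
    funext i
    fin_cases i <;>
      simp [Matrix.mulVec, dotProduct, Fin.sum_univ_two]
    · linear_combination -hq
    · ring
  by_cases hbz : π b = 0
  · by_cases hcz : π c = 0
    · -- b ≡ c ≡ 0 (mod ℓ); then a ≢ d (mod ℓ)
      have had : π a ≠ π d := by
        intro h
        apply hred
        refine ⟨π a, ?_⟩
        ext i j
        fin_cases i <;> fin_cases j <;>
          simp [Matrix.map_apply, ← ha, ← hb0, ← hc0, ← hd0, hbz, hcz, h]
      have h2e' : (2 : ZMod ℓ) * π e = 1 := by
        have h := congrArg π h2e
        rw [map_mul, map_one, map_ofNat] at h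
        exact h
      have hs' : (π s) ^ 2 = (π a - π d) ^ 2 := by
        have := congrArg π hs
        simp only [← ha, ← hb0, ← hc0, ← hd0, map_sub, map_mul, map_add, map_pow, map_ofNat, hbz, hcz,
          mul_zero, zero_mul, sub_zero] at this
        linear_combination -this
      have hcases : π s = π a - π d ∨ π s = -(π a - π d) := by
        have hfac : (π s - (π a - π d)) * (π s + (π a - π d)) = 0 := by
          linear_combination hs'
        rcases mul_eq_zero.mp hfac with h | h
        · exact Or.inl (sub_eq_zero.mp h)
        · exact Or.inr (eq_neg_of_add_eq_zero_left h)
      set σ := if π s = π a - π d then -s else s with hσdef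
      have hσ2 : (a + d) ^ 2 - 4 * (a * d - b * c) = σ ^ 2 := by
        have : σ ^ 2 = s ^ 2 := by
          simp only [hσdef]; split_ifs <;> ring
        exact hs.trans this.symm
      have hσ' : π σ = π d - π a := by
        simp only [hσdef]
        split_ifs with h
        · rw [map_neg, h]; ring
        · rcases hcases with h' | h'
          · exact absurd h' h
          · rw [h']; ring
      have hcoord : π (e * ((a + d) + σ) - a) ≠ 0 := by
        intro h0
        rw [map_sub, map_mul, map_add, map_add] at h0
        have : π d = π a := by
          linear_combination h0 - π e * hσ' - π d * h2e'
        exact had this.symm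
      exact ⟨![b, e * ((a + d) + σ) - a], e * ((a + d) + σ),
        prim _ ⟨1, by simpa using hcoord⟩, eig1 σ hσ2⟩
    · exact ⟨![e * ((a + d) + s) - d, c], e * ((a + d) + s),
        prim _ ⟨1, by simpa using hcz⟩, eig2 s hs⟩
  · exact ⟨![b, e * ((a + d) + s) - a], e * ((a + d) + s),
      prim _ ⟨0, by simpa using hbz⟩, eig1 s hs⟩
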